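/- arXiv:math/0006134 — 2 statements merged into one kernel-verified Lean document; each statement's English description precedes it below -/
import Mathlib

section
/- Let (p_n) be a sequence with 2 < p_n < ∞ decreasing to 2 and let (k_n) be a sequence of positive integers. Then the space Z = (∑_{n=0}^∞ ℓ_{p_n}^{k_n})_2 is asymptotically Hilbertian: there is a constant K such that for every m ≥ 1 there is a closed subspace X_m of Z of finite codimension such that every m-dimensional subspace of X_m is K-isomorphic to ℓ₂^m. -/
open scoped ENNReal
open Module
set_option synthInstance.maxHeartbeats 1000000
set_option maxHeartbeats 1000000

/-- The finite-dimensional complex space `ℓ_p^k = (ℂ^k, ‖·‖_p)` (with `p` clamped below by `1`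
so that the `PiLp` instances apply; in our applications `2 < p`). -/
abbrev ellp (p : ℝ) (k : ℕ) : Type :=
  PiLp (ENNReal.ofReal (max p 1)) (fun _ : Fin k => ℂ)

instance (p : ℝ) : Fact ((1 : ℝ≥0∞) ≤ ENNReal.ofReal (max p 1)) :=
  ⟨by
    rw [show (1 : ℝ≥0∞) = ENNReal.ofReal 1 by simp]
    exact ENNReal.ofReal_le_ofReal (le_max_right _ _)⟩

/-- The ℓ₂-direct sum `Z = (∑_n ℓ_{p_n}^{k_n})₂`. -/
abbrev lpSum (p : ℕ → ℝ) (k : ℕ → ℕ) : Type :=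
  lp (fun n => ellp (p n) (k n)) 2

/-- A subspace `F` (of dimension `m`) is `K`-isomorphic to `ℓ₂^m` if there is a (continuous)
linear isomorphism `T : F ≃ ℓ₂^m` with `‖T‖ * ‖T⁻¹‖ ≤ K`. -/
def KIsomEuclidean (K : ℝ) {X : Type*} [NormedAddCommGroup X] [NormedSpace ℂ X]
    (F : Submodule ℂ X) (m : ℕ) : Prop :=
  ∃ T : F ≃L[ℂ] EuclideanSpace ℂ (Fin m),
    ‖(T : F →L[ℂ] EuclideanSpace ℂ (Fin m))‖ *
      ‖(T.symm : EuclideanSpace ℂ (Fin m) →L[ℂ] F)‖ ≤ K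

section Helpers

/-- helper: rpow comparison -/
lemma rpow_le_rpow_of_le_of_exp {t B e e' : ℝ} (ht : 0 ≤ t) (htB : t ≤ B) (hB : 1 ≤ B)
    (he : 0 ≤ e) (hee' : e ≤ e') : t ^ e ≤ B ^ e' :=
  le_trans (Real.rpow_le_rpow ht htB he) (Real.rpow_le_rpow_of_exponent_le hB hee')

lemma sq_eq_rpow_two (t : ℝ) : t ^ (2:ℝ) = t ^ 2 := Real.rpow_two t

lemma sqrt_bound {a b c : ℝ} (ha : 0 ≤ a) (hb : 0 ≤ b) (hc : 0 ≤ c) (h : a^2 ≤ c * b^2) :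
    a ≤ Real.sqrt c * b := by
  calc a = Real.sqrt (a^2) := (Real.sqrt_sq ha).symm
  _ ≤ Real.sqrt (c * b^2) := Real.sqrt_le_sqrt h
  _ = Real.sqrt c * b := by rw [Real.sqrt_mul hc, Real.sqrt_sq hb]

/-- Auerbach-type lemma: a finite-dimensional subspace has a normalized spanning family with
controlled coordinate functionals. -/
lemma auerbach_lite {V : Type*} [NormedAddCommGroup V] [NormedSpace ℂ V] (d : ℕ) :
    ∀ (W : Submodule ℂ V), FiniteDimensional ℂ W → finrank ℂ W = d →
      ∃ g : Fin d → V, (∀ i, ‖g i‖ ≤ 1) ∧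
        ∀ x ∈ W, ∃ a : Fin d → ℂ, x = ∑ i, a i • g i ∧ ∀ i, ‖a i‖ ≤ 2 ^ d * ‖x‖ := by
  induction d with
  | zero =>
    intro W _ hW
    refine ⟨fun _ => 0, by simp, fun x hx => ⟨fun _ => 0, ?_, by simp⟩⟩
    have hbot : W = ⊥ := Submodule.finrank_eq_zero.1 hW
    have : x = 0 := by simpa [hbot] using hx
    simp [this]
  | succ d ih =>
    intro W hWfd hW
    have hne : W ≠ ⊥ := by
      intro h
      rw [h, finrank_bot] at hW
      omega
    obtain ⟨⟨w, hwW⟩, hw0⟩ := Submodule.nonzero_mem_of_bot_lt (bot_lt_iff_ne_bot.2 hne)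
    have hw0' : w ≠ 0 := by simpa [Subtype.ext_iff] using hw0
    set u : V := ‖w‖⁻¹ • w with hu_def
    have hnw : ‖w‖ ≠ 0 := norm_ne_zero_iff.2 hw0'
    have hu1 : ‖u‖ = 1 := by
      rw [hu_def, norm_smul, norm_inv, norm_norm, inv_mul_cancel₀ hnw]
    have hu0 : u ≠ 0 := by
      intro h; rw [h, norm_zero] at hu1; norm_num at hu1
    have huW : u ∈ W := W.smul_mem _ hwW
    obtain ⟨φ, hφ1, hφu⟩ := exists_dual_vector ℂ u (norm_ne_zero_iff.2 hu0)
    have hφu1 : φ u = 1 := by rw [hφu, hu1]; norm_num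
    set ψ : W →ₗ[ℂ] ℂ := φ.toLinearMap.comp W.subtype with hψ_def
    have hψ_apply : ∀ y : W, ψ y = φ y := fun y => rfl
    have hsurj : Function.Surjective ψ := by
      intro c
      refine ⟨c • ⟨u, huW⟩, ?_⟩
      simp [hψ_apply, hφu1]
    have hker : finrank ℂ (LinearMap.ker ψ) = d := by
      have h1 := LinearMap.finrank_range_add_finrank_ker ψ
      rw [LinearMap.range_eq_top.2 hsurj, finrank_top, finrank_self, hW] at h1
      omega
    set W' : Submodule ℂ V := Submodule.map W.subtype (LinearMap.ker ψ) with hW'_def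
    have hW'fd : FiniteDimensional ℂ W' := by
      have e := Submodule.equivMapOfInjective W.subtype (Submodule.injective_subtype W)
        (LinearMap.ker ψ)
      exact Module.Finite.equiv e
    have hW'rank : finrank ℂ W' = d := by
      rw [hW'_def, Submodule.finrank_map_subtype_eq, hker]
    obtain ⟨g', hg'1, hrep'⟩ := ih W' hW'fd hW'rank
    refine ⟨Fin.cons u g', ?_, ?_⟩
    · intro i
      refine Fin.cases ?_ ?_ i
      · simpa using hu1.le
      · intro j; simpa using hg'1 j
    · intro x hx
      set a0 : ℂ := φ x with ha0_def
      set y : V := x - a0 • u with hy_def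
      have hyW : y ∈ W := W.sub_mem hx (W.smul_mem _ huW)
      have hker0 : (⟨y, hyW⟩ : W) ∈ LinearMap.ker ψ := by
        rw [LinearMap.mem_ker, hψ_apply]
        show φ (x - a0 • u) = 0
        rw [map_sub, map_smul, hφu1, smul_eq_mul, mul_one, ha0_def, sub_self]
      have hyW' : y ∈ W' := ⟨⟨y, hyW⟩, hker0, rfl⟩
      obtain ⟨a', hrep, hbound⟩ := hrep' y hyW'
      have ha0 : ‖a0‖ ≤ ‖x‖ := by
        calc ‖a0‖ = ‖φ x‖ := rfl
        _ ≤ ‖φ‖ * ‖x‖ := φ.le_opNorm x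
        _ = ‖x‖ := by rw [hφ1, one_mul]
      have hy_norm : ‖y‖ ≤ 2 * ‖x‖ := by
        calc ‖y‖ ≤ ‖x‖ + ‖a0 • u‖ := norm_sub_le _ _
        _ = ‖x‖ + ‖a0‖ := by rw [norm_smul, hu1, mul_one]
        _ ≤ ‖x‖ + ‖x‖ := by linarith
        _ = 2 * ‖x‖ := by ring
      refine ⟨Fin.cons a0 a', ?_, ?_⟩
      · rw [Fin.sum_univ_succ]
        simp only [Fin.cons_zero, Fin.cons_succ]
        rw [← hrep, hy_def]
        abel
      · intro i
        refine Fin.cases ?_ ?_ i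
        · calc ‖(Fin.cons a0 a' : Fin (d+1) → ℂ) 0‖ = ‖a0‖ := by simp
          _ ≤ ‖x‖ := ha0
          _ ≤ 2 ^ (d+1) * ‖x‖ := by
              have h2 : (1:ℝ) ≤ 2 ^ (d+1) := one_le_pow₀ (by norm_num)
              nlinarith [norm_nonneg x]
        · intro j
          calc ‖(Fin.cons a0 a' : Fin (d+1) → ℂ) j.succ‖ = ‖a' j‖ := by simp
          _ ≤ 2 ^ d * ‖y‖ := hbound j
          _ ≤ 2 ^ d * (2 * ‖x‖) := by
              exact mul_le_mul_of_nonneg_left hy_norm (by positivity)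
          _ = 2 ^ (d+1) * ‖x‖ := by ring

lemma kisom_of_map {X H : Type*} [NormedAddCommGroup X] [NormedSpace ℂ X]
    [NormedAddCommGroup H] [InnerProductSpace ℂ H]
    (F : Submodule ℂ X) [FiniteDimensional ℂ F] (m : ℕ) (hm : finrank ℂ F = m)
    (Φ : F →ₗ[ℂ] H) (C : ℝ) (hC0 : 0 < C)
    (hlow : ∀ u : F, C⁻¹ * ‖u‖^2 ≤ ‖Φ u‖^2) (hup : ∀ u : F, ‖Φ u‖^2 ≤ C * ‖u‖^2) :
    KIsomEuclidean C F m := by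
  have hinj : Function.Injective Φ := by
    intro u v huv
    have h1 : Φ (u - v) = 0 := by rw [map_sub, huv, sub_self]
    have h2 := hlow (u - v)
    rw [h1, norm_zero] at h2
    have h2' : C⁻¹ * ‖(u - v : F)‖ ^ 2 ≤ 0 := by simpa using h2
    have ha2 : ‖(u - v : F)‖ ^ 2 ≤ 0 := by
      have h9 : C * (C⁻¹ * ‖(u - v : F)‖ ^ 2) ≤ C * 0 :=
        mul_le_mul_of_nonneg_left h2' (le_of_lt hC0)
      rwa [← mul_assoc, mul_inv_cancel₀ (ne_of_gt hC0), one_mul, mul_zero] at h9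
    have h3 : ‖(u - v : F)‖ = 0 :=
      (pow_eq_zero_iff two_ne_zero).1 (le_antisymm ha2 (sq_nonneg _))
    have h4 : (u - v : F) = 0 := norm_eq_zero.1 h3
    exact sub_eq_zero.1 h4
  haveI hrfd : FiniteDimensional ℂ (LinearMap.range Φ) := inferInstance
  have hrankS : finrank ℂ (LinearMap.range Φ) = m := by
    rw [LinearMap.finrank_range_of_inj hinj, hm]
  set iso1 := (stdOrthonormalBasis ℂ (LinearMap.range Φ)).repr with hiso1_def
  set iso2 := LinearIsometryEquiv.piLpCongrLeft 2 ℂ ℂ (finCongr hrankS) with hiso2_def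
  set eqv : F ≃ₗ[ℂ] EuclideanSpace ℂ (Fin m) :=
    (LinearEquiv.ofInjective Φ hinj).trans (iso1.toLinearEquiv.trans iso2.toLinearEquiv)
    with heqv_def
  set T : F ≃L[ℂ] EuclideanSpace ℂ (Fin m) := eqv.toContinuousLinearEquiv with hT_def
  have hTnorm : ∀ u : F, ‖T u‖ = ‖Φ u‖ := by
    intro u
    have h1 : (T : F → EuclideanSpace ℂ (Fin m)) = eqv :=
      LinearEquiv.coe_toContinuousLinearEquiv' eqv
    rw [show T u = eqv u from congrFun h1 u]
    rw [heqv_def]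
    rw [LinearEquiv.trans_apply, LinearEquiv.trans_apply]
    rw [LinearIsometryEquiv.coe_toLinearEquiv, LinearIsometryEquiv.coe_toLinearEquiv]
    rw [iso2.norm_map, iso1.norm_map]
    calc ‖(LinearEquiv.ofInjective Φ hinj) u‖
        = ‖(((LinearEquiv.ofInjective Φ hinj) u : LinearMap.range Φ) : H)‖ := rfl
    _ = ‖Φ u‖ := by rw [LinearEquiv.ofInjective_apply]
  have hub : ∀ u : F, ‖T u‖ ≤ Real.sqrt C * ‖u‖ := by
    intro u
    refine sqrt_bound (norm_nonneg _) (norm_nonneg _) (le_of_lt hC0) ?_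
    rw [hTnorm u]
    exact hup u
  have hlb : ∀ y : EuclideanSpace ℂ (Fin m), ‖T.symm y‖ ≤ Real.sqrt C * ‖y‖ := by
    intro y
    refine sqrt_bound (norm_nonneg _) (norm_nonneg _) (le_of_lt hC0) ?_
    have h6 := hlow (T.symm y)
    rw [← hTnorm (T.symm y), T.apply_symm_apply] at h6
    have h10 : C * (C⁻¹ * ‖T.symm y‖ ^ 2) ≤ C * ‖y‖ ^ 2 :=
      mul_le_mul_of_nonneg_left h6 (le_of_lt hC0)
    rwa [← mul_assoc, mul_inv_cancel₀ (ne_of_gt hC0), one_mul] at h10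
  refine ⟨T, ?_⟩
  have h7 : ‖(T : F →L[ℂ] EuclideanSpace ℂ (Fin m))‖ ≤ Real.sqrt C :=
    ContinuousLinearMap.opNorm_le_bound _ (Real.sqrt_nonneg _) (fun u => by simpa using hub u)
  have h8 : ‖(T.symm : EuclideanSpace ℂ (Fin m) →L[ℂ] F)‖ ≤ Real.sqrt C :=
    ContinuousLinearMap.opNorm_le_bound _ (Real.sqrt_nonneg _) (fun y => by simpa using hlb y)
  calc ‖(T : F →L[ℂ] EuclideanSpace ℂ (Fin m))‖ *
        ‖(T.symm : EuclideanSpace ℂ (Fin m) →L[ℂ] F)‖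
      ≤ Real.sqrt C * Real.sqrt C := mul_le_mul h7 h8 (ContinuousLinearMap.opNorm_nonneg _) (Real.sqrt_nonneg _)
  _ = C := Real.mul_self_sqrt (le_of_lt hC0)

end Helpers

lemma block_weight (pp q : ℝ) (hpp : 2 < pp) (hpq : pp ≤ q) (k m : ℕ) (hm : 1 ≤ m)
    (W : Submodule ℂ (ellp pp k)) (hWrank : finrank ℂ W ≤ m) :
    ∃ lam : Fin k → ℝ, (∀ j, 0 ≤ lam j) ∧ ∀ x ∈ W,
      ((((m:ℝ) * 2 ^ m) ^ (q - 2))⁻¹ * ‖x‖ ^ 2 ≤ ∑ j, lam j * ‖x j‖ ^ 2 ∧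
      ∑ j, lam j * ‖x j‖ ^ 2 ≤ ((m:ℝ) * 2 ^ m) ^ (q - 2) * ‖x‖ ^ 2) := by
  have hpp0 : (0:ℝ) < pp := by linarith
  have hq2 : (0:ℝ) ≤ q - 2 := by linarith
  have hpp2 : (0:ℝ) < pp - 2 := by linarith
  set B : ℝ := (m:ℝ) * 2 ^ m with hB_def
  have h2m : (1:ℝ) ≤ 2 ^ m := one_le_pow₀ (by norm_num)
  have hm1 : (1:ℝ) ≤ (m:ℝ) := by exact_mod_cast hm
  have hB1 : (1:ℝ) ≤ B := by nlinarith
  have hBq : (0:ℝ) < B ^ (q - 2) := Real.rpow_pos_of_pos (by linarith) _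
  -- norm formula on ellp pp k
  have hmax : max pp 1 = pp := max_eq_left (by linarith)
  have htr : (ENNReal.ofReal (max pp 1)).toReal = pp := by
    rw [hmax, ENNReal.toReal_ofReal (by linarith)]
  have hnorm : ∀ x : ellp pp k, ‖x‖ = (∑ j, ‖x j‖ ^ pp) ^ (1/pp) := by
    intro x
    have := PiLp.norm_eq_sum (p := ENNReal.ofReal (max pp 1))
      (by rw [htr]; exact hpp0) x
    rwa [htr] at this
  have hnorm_pow : ∀ x : ellp pp k, ‖x‖ ^ pp = ∑ j, ‖x j‖ ^ pp := by
    intro x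
    rw [hnorm, ← Real.rpow_mul (Finset.sum_nonneg fun j _ => Real.rpow_nonneg (norm_nonneg _) _),
      one_div, inv_mul_cancel₀ (ne_of_gt hpp0), Real.rpow_one]
  -- the basis
  set d : ℕ := finrank ℂ W with hd_def
  have hdm : d ≤ m := hd_def ▸ hWrank
  obtain ⟨g, hg1, hrep⟩ := auerbach_lite d W inferInstance rfl
  set h : Fin k → ℝ := fun j => ∑ i, ‖g i j‖ with hh_def
  have hh0 : ∀ j, 0 ≤ h j := fun j => Finset.sum_nonneg fun i _ => norm_nonneg _
  refine ⟨fun j => h j ^ (pp - 2), fun j => Real.rpow_nonneg (hh0 j) _, ?_⟩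
  -- bound on ∑ h^pp
  have hsum_h : ∑ j, h j ^ pp ≤ (d:ℝ) ^ pp := by
    set Vi : Fin d → ellp pp k := fun i => WithLp.toLp _ (fun j => (‖g i j‖ : ℂ)) with hVi_def
    set Vs : ellp pp k := ∑ i, Vi i with hVs_def
    have hVapp : ∀ j, Vs j = ((h j : ℝ) : ℂ) := by
      intro j
      rw [hVs_def, WithLp.ofLp_sum, Finset.sum_apply j Finset.univ _, hh_def]
      simp only [hVi_def, WithLp.ofLp_toLp]
      norm_cast
    have hVnorm : ‖Vs‖ ≤ (d:ℝ) := by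
      calc ‖Vs‖ ≤ ∑ i : Fin d, ‖Vi i‖ := norm_sum_le _ _
      _ ≤ ∑ i : Fin d, (1:ℝ) := by
          refine Finset.sum_le_sum fun i _ => ?_
          have : ‖Vi i‖ = ‖g i‖ := by
            rw [hnorm, hnorm]
            congr 1
            refine Finset.sum_congr rfl fun j _ => ?_
            rw [show (Vi i) j = ((‖g i j‖ : ℝ):ℂ) from rfl]
            rw [Complex.norm_real, norm_norm]
          rw [this]; exact hg1 i
      _ = (d:ℝ) := by simp
    calc ∑ j, h j ^ pp = ∑ j, ‖Vs j‖ ^ pp := by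
          refine Finset.sum_congr rfl fun j _ => ?_
          rw [hVapp j, Complex.norm_real, Real.norm_of_nonneg (hh0 j)]
    _ = ‖Vs‖ ^ pp := (hnorm_pow Vs).symm
    _ ≤ (d:ℝ) ^ pp := Real.rpow_le_rpow (norm_nonneg _) hVnorm (le_of_lt hpp0)
  -- main part
  intro x hx
  obtain ⟨a, hxa, hab⟩ := hrep x hx
  have hx_apply : ∀ j, x j = ∑ i, a i * g i j := by
    intro j
    rw [hxa, WithLp.ofLp_sum, Finset.sum_apply j Finset.univ _]
    rfl
  have hxj : ∀ j, ‖x j‖ ≤ 2 ^ d * ‖x‖ * h j := by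
    intro j
    rw [hx_apply j]
    calc ‖∑ i, a i * g i j‖ ≤ ∑ i, ‖a i * g i j‖ := norm_sum_le _ _
    _ ≤ ∑ i, (2 ^ d * ‖x‖) * ‖g i j‖ := by
        refine Finset.sum_le_sum fun i _ => ?_
        rw [norm_mul]
        exact mul_le_mul_of_nonneg_right (hab i) (norm_nonneg _)
    _ = 2 ^ d * ‖x‖ * h j := by rw [← Finset.mul_sum]
  set S : ℝ := ∑ j, h j ^ (pp - 2) * ‖x j‖ ^ 2 with hS_def
  have hS0 : 0 ≤ S :=
    Finset.sum_nonneg fun j _ => mul_nonneg (Real.rpow_nonneg (hh0 j) _) (sq_nonneg _)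
  constructor
  · -- lower bound
    rcases eq_or_lt_of_le (norm_nonneg x) with hx0 | hx0
    · rw [← hx0]
      simpa using hS0
    · -- ‖x‖ > 0 case
      have key : ∑ j, ‖x j‖ ^ pp ≤ ((2:ℝ) ^ d * ‖x‖) ^ (pp - 2) * S := by
        rw [hS_def, Finset.mul_sum]
        refine Finset.sum_le_sum fun j _ => ?_
        have e1 : ‖x j‖ ^ pp = ‖x j‖ ^ (pp - 2) * ‖x j‖ ^ 2 := by
          rw [← sq_eq_rpow_two, ← Real.rpow_add' (norm_nonneg _) (by linarith : pp - 2 + 2 ≠ 0)]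
          norm_num
        have e2 : ((2:ℝ)^d * ‖x‖) ^ (pp-2) * (h j ^ (pp-2) * ‖x j‖^2)
            = (((2:ℝ)^d * ‖x‖) ^ (pp-2) * h j ^ (pp-2)) * ‖x j‖^2 := by ring
        rw [e1, e2]
        refine mul_le_mul_of_nonneg_right ?_ (sq_nonneg _)
        rw [← Real.mul_rpow (by positivity) (hh0 j)]
        exact Real.rpow_le_rpow (norm_nonneg _) (hxj j) (le_of_lt hpp2)
      have hxpp : ‖x‖ ^ pp = ‖x‖ ^ (pp-2) * ‖x‖^2 := by
        rw [← sq_eq_rpow_two, ← Real.rpow_add' (norm_nonneg _) (by linarith : pp - 2 + 2 ≠ 0)]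
        norm_num
      have hxp2 : 0 < ‖x‖ ^ (pp-2) := Real.rpow_pos_of_pos hx0 _
      have key2 : ‖x‖ ^ (pp-2) * ‖x‖^2 ≤ ‖x‖ ^ (pp-2) * (((2:ℝ)^d) ^ (pp-2) * S) := by
        calc ‖x‖^(pp-2) * ‖x‖^2 = ‖x‖ ^ pp := hxpp.symm
        _ = ∑ j, ‖x j‖ ^ pp := hnorm_pow x
        _ ≤ ((2:ℝ)^d * ‖x‖) ^ (pp-2) * S := key
        _ = ‖x‖ ^ (pp-2) * (((2:ℝ)^d) ^ (pp-2) * S) := by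
            rw [Real.mul_rpow (by positivity) (norm_nonneg _)]; ring
      have key3 : ‖x‖^2 ≤ ((2:ℝ)^d) ^ (pp-2) * S := (mul_le_mul_iff_right₀ hxp2).1 key2
      have hc : ((2:ℝ)^d) ^ (pp-2) ≤ B ^ (q-2) := by
        refine rpow_le_rpow_of_le_of_exp (by positivity) ?_ hB1 (le_of_lt hpp2) (by linarith)
        calc ((2:ℝ)^d) ≤ 2 ^ m := pow_le_pow_right₀ (by norm_num) hdm
        _ ≤ B := by rw [hB_def]; nlinarith
      rw [inv_mul_le_iff₀ hBq]
      calc ‖x‖^2 ≤ ((2:ℝ)^d) ^ (pp-2) * S := key3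
      _ ≤ B ^ (q-2) * S := mul_le_mul_of_nonneg_right hc hS0
  · -- upper bound
    have hP : Real.HolderConjugate (pp/(pp-2)) (pp/2) := by
      rw [Real.holderConjugate_iff]
      constructor
      · rw [lt_div_iff₀ hpp2]; linarith
      · rw [inv_div, inv_div, ← add_div, show pp - 2 + 2 = pp by ring]
        exact div_self (ne_of_gt hpp0)
    have holder := Real.inner_le_Lp_mul_Lq_of_nonneg (s := Finset.univ (α := Fin k)) hP
      (f := fun j => h j ^ (pp-2)) (g := fun j => ‖x j‖^2)
      (fun j _ => Real.rpow_nonneg (hh0 j) _) (fun j _ => sq_nonneg _)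
    have e3 : ∀ j : Fin k, (h j ^ (pp-2)) ^ (pp/(pp-2)) = h j ^ pp := by
      intro j
      rw [← Real.rpow_mul (hh0 j) (pp-2) (pp/(pp-2))]
      congr 1
      field_simp
    have e4 : ∀ j : Fin k, (‖x j‖^2) ^ (pp/2) = ‖x j‖ ^ pp := by
      intro j
      rw [← sq_eq_rpow_two, ← Real.rpow_mul (norm_nonneg _)]
      congr 1
      ring
    rw [Finset.sum_congr rfl (fun j _ => e3 j), Finset.sum_congr rfl (fun j _ => e4 j)] at holder
    have hfac2 : (∑ j, ‖x j‖ ^ pp) ^ (1/(pp/2)) = ‖x‖ ^ 2 := by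
      rw [← hnorm_pow x, ← Real.rpow_mul (norm_nonneg _), ← sq_eq_rpow_two]
      congr 1
      field_simp
    have hfac1 : (∑ j, h j ^ pp) ^ (1/(pp/(pp-2))) ≤ B ^ (q-2) := by
      have h1 : (∑ j, h j ^ pp) ^ (1/(pp/(pp-2))) ≤ ((d:ℝ) ^ pp) ^ (1/(pp/(pp-2))) := by
        refine Real.rpow_le_rpow (Finset.sum_nonneg fun j _ => Real.rpow_nonneg (hh0 j) _)
          hsum_h (by positivity)
      refine le_trans h1 ?_
      rw [← Real.rpow_mul (Nat.cast_nonneg d), one_div]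
      have e5 : pp * (pp/(pp-2))⁻¹ = pp - 2 := by
        rw [inv_div]
        field_simp
      rw [e5]
      refine rpow_le_rpow_of_le_of_exp (Nat.cast_nonneg d) ?_ hB1 (le_of_lt hpp2) (by linarith)
      calc (d:ℝ) ≤ (m:ℝ) := by exact_mod_cast hdm
      _ ≤ B := by rw [hB_def]; nlinarith
    calc S ≤ (∑ j, h j ^ pp) ^ (1/(pp/(pp-2))) * (∑ j, ‖x j‖ ^ pp) ^ (1/(pp/2)) := holder
    _ = (∑ j, h j ^ pp) ^ (1/(pp/(pp-2))) * ‖x‖ ^ 2 := by rw [hfac2]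
    _ ≤ B ^ (q-2) * ‖x‖ ^ 2 := mul_le_mul_of_nonneg_right hfac1 (sq_nonneg _)

section LpHelpers

variable {E : ℕ → Type*} [∀ n, NormedAddCommGroup (E n)]

lemma lp_summable_sq (f : lp E 2) : Summable fun n => ‖f n‖ ^ 2 := by
  have h := (memℓp_gen_iff (p := 2) (by norm_num) (f := fun n => f n)).1 (lp.memℓp f)
  simpa [Real.rpow_two] using h

lemma lp_norm_sq_eq (f : lp E 2) : ‖f‖ ^ 2 = ∑' n, ‖f n‖ ^ 2 := by
  have h := lp.norm_eq_tsum_rpow (p := 2) (by norm_num) f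
  have h2 : ((2:ℝ≥0∞).toReal) = (2:ℝ) := by norm_num
  rw [h, h2]
  rw [← Real.rpow_natCast _ 2,
    ← Real.rpow_mul (tsum_nonneg fun n => Real.rpow_nonneg (norm_nonneg _) _)]
  norm_num

end LpHelpers

/-- The `n`-th coordinate of the direct sum, as a linear map. -/
noncomputable def lpCoord (p : ℕ → ℝ) (k : ℕ → ℕ) (n : ℕ) : lpSum p k →ₗ[ℂ] ellp (p n) (k n) where
  toFun f := f n
  map_add' f g := rfl
  map_smul' c f := rfl

lemma lpCoord_cont (p : ℕ → ℝ) (k : ℕ → ℕ) (n : ℕ) : Continuous (lpCoord p k n) := by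
  refine (LinearMap.mkContinuous (lpCoord p k n) 1 (fun f => ?_)).continuous
  rw [one_mul]
  exact lp.norm_apply_le_norm (by norm_num) f n

/-- If `2 < p_n < ∞` decreases to `2` and `k_n ≥ 1`, then `Z = (∑_n ℓ_{p_n}^{k_n})₂` is
asymptotically Hilbertian: for some constant `K`, for every `m ≥ 1` there is a closed
finite-codimensional subspace `X_m` of `Z` all of whose `m`-dimensional subspaces are
`K`-isomorphic to `ℓ₂^m`. -/
theorem lpSum_asympHilbertian (p : ℕ → ℝ) (k : ℕ → ℕ)
    (hp2 : ∀ n, 2 < p n) (hpdec : Antitone p)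
    (hplim : Filter.Tendsto p Filter.atTop (nhds 2)) (hk : ∀ n, 0 < k n) :
    ∃ K : ℝ, ∀ m : ℕ, 1 ≤ m → ∃ Xm : Submodule ℂ (lpSum p k),
      IsClosed (Xm : Set (lpSum p k)) ∧
      FiniteDimensional ℂ (lpSum p k ⧸ Xm) ∧
      ∀ F : Submodule ℂ (lpSum p k), F ≤ Xm → finrank ℂ F = m → KIsomEuclidean K F m := by
  refine ⟨2, ?_⟩
  intro m hm
  set B : ℝ := (m:ℝ) * 2 ^ m with hB_def
  have hm1 : (1:ℝ) ≤ (m:ℝ) := by exact_mod_cast hm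
  have h2m : (2:ℝ) ≤ 2 ^ m := by
    calc (2:ℝ) = 2 ^ 1 := (pow_one 2).symm
    _ ≤ 2 ^ m := pow_le_pow_right₀ one_le_two hm
  have hB2 : (2:ℝ) ≤ B := by rw [hB_def]; nlinarith
  -- choose the tail index N
  have hlogB : 0 < Real.log B := Real.log_pos (by linarith)
  have hε : 0 < Real.log 2 / Real.log B := by
    apply div_pos (Real.log_pos (by norm_num)) hlogB
  obtain ⟨N, hN⟩ := (Metric.tendsto_atTop.1 hplim) _ hε
  have hpN : p N - 2 < Real.log 2 / Real.log B := by
    have h1 := hN N le_rfl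
    rw [Real.dist_eq] at h1
    have h2 := le_abs_self (p N - 2)
    linarith
  set C : ℝ := B ^ (p N - 2) with hC_def
  have hC2 : C ≤ 2 := by
    have h3 : (Real.log 2 / Real.log B) * Real.log B = Real.log 2 :=
      div_mul_cancel₀ _ (ne_of_gt hlogB)
    have he : Real.log B * (p N - 2) ≤ Real.log 2 := by
      nlinarith [mul_lt_mul_of_pos_right hpN hlogB]
    calc C = Real.exp (Real.log B * (p N - 2)) := by
          rw [hC_def, Real.rpow_def_of_pos (by linarith : (0:ℝ) < B)]
    _ ≤ Real.exp (Real.log 2) := Real.exp_le_exp.2 he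
    _ = 2 := Real.exp_log (by norm_num)
  have hC0 : 0 < C := Real.rpow_pos_of_pos (by linarith) _
  have hC1 : 1 ≤ C := Real.one_le_rpow (by linarith) (by linarith [hp2 N])
  -- the tail submodule
  set Ψ : lpSum p k →ₗ[ℂ] (∀ n : Fin N, ellp (p n) (k n)) :=
    LinearMap.pi (fun n : Fin N => lpCoord p k n) with hΨ_def
  haveI : FiniteDimensional ℂ (∀ n : Fin N, ellp (p n) (k n)) := by infer_instance
  refine ⟨LinearMap.ker Ψ, ?_, ?_, ?_⟩
  · -- closedness
    have hcont : Continuous Ψ := by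
      apply continuous_pi
      intro n
      exact lpCoord_cont p k n
    have hset : (LinearMap.ker Ψ : Set (lpSum p k)) = Ψ ⁻¹' {0} := by
      ext f; simp [LinearMap.mem_ker]
    rw [hset]
    exact isClosed_singleton.preimage hcont
  · -- finite codimension
    exact Module.Finite.equiv Ψ.quotKerEquivRange.symm
  · -- the main part
    intro F hF hFrank
    haveI hFfd : FiniteDimensional ℂ F := FiniteDimensional.of_finrank_pos (by omega)
    have hblocks : ∀ n : ℕ, ∃ lam : Fin (k n) → ℝ, (∀ j, 0 ≤ lam j) ∧
        ∀ x : lpSum p k, x ∈ F →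
          (C⁻¹ * ‖x n‖ ^ 2 ≤ ∑ j, lam j * ‖x n j‖ ^ 2 ∧
           ∑ j, lam j * ‖x n j‖ ^ 2 ≤ C * ‖x n‖ ^ 2) := by
      intro n
      rcases lt_or_ge n N with hn | hn
      · refine ⟨fun _ => 0, fun j => le_refl 0, fun x hx => ?_⟩
        have hx0 : x n = 0 := by
          have h0 : Ψ x = 0 := hF hx
          exact congrFun h0 ⟨n, hn⟩
        rw [hx0]
        simp
      · obtain ⟨lamn, h0, hb⟩ := block_weight (p n) (p N) (hp2 n) (hpdec hn) (k n) m hm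
          (Submodule.map (lpCoord p k n) F)
          (le_trans (Submodule.finrank_map_le _ _) (le_of_eq hFrank))
        refine ⟨lamn, h0, fun x hx => ?_⟩
        have hb2 := hb (x n) ⟨x, hx, rfl⟩
        rw [← hB_def, ← hC_def] at hb2
        exact hb2
    choose lam hlam0 hlam using hblocks
    have hSn_nonneg : ∀ (x : lpSum p k) (n : ℕ), 0 ≤ ∑ j, lam n j * ‖x n j‖ ^ 2 :=
      fun x n => Finset.sum_nonneg fun j _ => mul_nonneg (hlam0 n j) (sq_nonneg _)
    have hSn_summable : ∀ x : lpSum p k, x ∈ F →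
        Summable (fun n => ∑ j, lam n j * ‖x n j‖ ^ 2) := fun x hx =>
      Summable.of_nonneg_of_le (hSn_nonneg x) (fun n => (hlam n x hx).2)
        ((lp_summable_sq x).mul_left C)
    set Phi0 : (x : lpSum p k) → (n : ℕ) → EuclideanSpace ℂ (Fin (k n)) :=
      fun x n => WithLp.toLp 2 (fun j => ((Real.sqrt (lam n j) : ℝ) : ℂ) * x n j) with hPhi0_def
    have hPhi0norm : ∀ (x : lpSum p k) (n : ℕ),
        ‖Phi0 x n‖ ^ 2 = ∑ j, lam n j * ‖x n j‖ ^ 2 := by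
      intro x n
      rw [EuclideanSpace.norm_eq,
        Real.sq_sqrt (Finset.sum_nonneg fun j _ => sq_nonneg _)]
      refine Finset.sum_congr rfl fun j _ => ?_
      rw [norm_mul, Complex.norm_real, Real.norm_of_nonneg (Real.sqrt_nonneg _), mul_pow,
        Real.sq_sqrt (hlam0 n j)]
    have hmemPhi : ∀ x : lpSum p k, x ∈ F → Memℓp (Phi0 x) 2 := by
      intro x hx
      apply memℓp_gen
      have hs : Summable fun n => ‖Phi0 x n‖ ^ 2 :=
        (hSn_summable x hx).congr fun n => (hPhi0norm x n).symm
      simpa [Real.rpow_two] using hs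
    set Φ : F →ₗ[ℂ] lp (fun n => EuclideanSpace ℂ (Fin (k n))) 2 :=
      { toFun := fun u => ⟨Phi0 (u : lpSum p k), by exact hmemPhi (u : lpSum p k) u.2⟩
        map_add' := by
          intro u v
          apply Subtype.ext
          funext n
          ext j
          show ((Real.sqrt (lam n j) : ℝ) : ℂ) * ((u : lpSum p k) n j + (v : lpSum p k) n j)
            = ((Real.sqrt (lam n j) : ℝ) : ℂ) * ((u : lpSum p k) n j)
              + ((Real.sqrt (lam n j) : ℝ) : ℂ) * ((v : lpSum p k) n j)
          exact mul_add _ _ _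
        map_smul' := by
          intro c u
          apply Subtype.ext
          funext n
          ext j
          show ((Real.sqrt (lam n j) : ℝ) : ℂ) * (c * (u : lpSum p k) n j)
            = c * (((Real.sqrt (lam n j) : ℝ) : ℂ) * ((u : lpSum p k) n j))
          ring } with hΦ_def
    have hΦnorm : ∀ u : F, ‖Φ u‖ ^ 2 = ∑' n, ∑ j, lam n j * ‖(u : lpSum p k) n j‖ ^ 2 := by
      intro u
      rw [lp_norm_sq_eq]
      exact tsum_congr fun n => hPhi0norm (u : lpSum p k) n
    have hupper : ∀ u : F, ‖Φ u‖ ^ 2 ≤ C * ‖(u : lpSum p k)‖ ^ 2 := by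
      intro u
      rw [hΦnorm u]
      calc ∑' n, ∑ j, lam n j * ‖(u : lpSum p k) n j‖ ^ 2
          ≤ ∑' n, C * ‖(u : lpSum p k) n‖ ^ 2 :=
            Summable.tsum_le_tsum (fun n => (hlam n _ u.2).2) (hSn_summable _ u.2)
              ((lp_summable_sq _).mul_left C)
      _ = C * ‖(u : lpSum p k)‖ ^ 2 := by rw [tsum_mul_left, ← lp_norm_sq_eq]
    have hlower : ∀ u : F, C⁻¹ * ‖(u : lpSum p k)‖ ^ 2 ≤ ‖Φ u‖ ^ 2 := by
      intro u
      rw [hΦnorm u]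
      calc C⁻¹ * ‖(u : lpSum p k)‖ ^ 2 = ∑' n, C⁻¹ * ‖(u : lpSum p k) n‖ ^ 2 := by
            rw [tsum_mul_left, ← lp_norm_sq_eq]
      _ ≤ ∑' n, ∑ j, lam n j * ‖(u : lpSum p k) n j‖ ^ 2 :=
            Summable.tsum_le_tsum (fun n => (hlam n _ u.2).1) ((lp_summable_sq _).mul_left C⁻¹)
              (hSn_summable _ u.2)
    obtain ⟨T, hT⟩ := kisom_of_map F m hFrank Φ C hC0 (fun u => hlower u) (fun u => hupper u)
    exact ⟨T, le_trans hT hC2⟩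
end

section
/- Let (p_n) be a sequence with 2 < p_n < ∞ and (k_n) a sequence of positive integers. If the sequence k_n^{1/2 − 1/p_n} is bounded, then Z = (∑_{n=0}^∞ ℓ_{p_n}^{k_n})_2 is isomorphic to ℓ₂, i.e., there exists a continuous linear equivalence between Z and the complex Hilbert space ℓ₂(ℕ). -/
open scoped ENNReal
set_option synthInstance.maxHeartbeats 1000000
set_option maxHeartbeats 1000000

open scoped NNReal ComplexConjugate
open Finset Submodule

lemma aux_sum_rpow_le {k : ℕ} (b : Fin k → ℝ≥0) {t : ℝ} (ht : 1 ≤ t) :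
    ∑ i, b i ^ t ≤ (∑ i, b i) ^ t := by
  have ht0 : t ≠ 0 := by linarith
  have h1 : ∀ i : Fin k, b i ^ t ≤ b i * (∑ j, b j) ^ (t - 1) := by
    intro i
    have hb : b i ≤ ∑ j, b j := Finset.single_le_sum (fun j _ => zero_le) (mem_univ i)
    calc b i ^ t = b i ^ ((1 : ℝ) + (t - 1)) := by ring_nf
    _ = b i ^ (1 : ℝ) * b i ^ (t - 1) := NNReal.rpow_add' (by simpa using ht0) _
    _ ≤ b i * (∑ j, b j) ^ (t - 1) := by
        rw [NNReal.rpow_one]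
        exact mul_le_mul_right (NNReal.rpow_le_rpow hb (by linarith)) _
  calc ∑ i, b i ^ t ≤ ∑ i, b i * (∑ j, b j) ^ (t - 1) := Finset.sum_le_sum fun i _ => h1 i
  _ = (∑ j, b j) ^ (1 : ℝ) * (∑ j, b j) ^ (t - 1) := by rw [← Finset.sum_mul, NNReal.rpow_one]
  _ = (∑ j, b j) ^ t := by rw [← NNReal.rpow_add' (by simpa using ht0) _]; ring_nf

lemma aux_holder {k : ℕ} (b : Fin k → ℝ≥0) {t : ℝ} (ht : 1 ≤ t) :
    (∑ i, b i) ≤ (k : ℝ≥0) ^ (1 - t⁻¹) * (∑ i, b i ^ t) ^ t⁻¹ := by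
  have := NNReal.inner_le_weight_mul_Lp univ ht (fun _ => 1) b
  simpa using this

section
variable {P : ℝ} (hP : 2 < P) {k : ℕ}

lemma toReal_q (hP : 2 < P) : (ENNReal.ofReal (max P 1)).toReal = P := by
  rw [ENNReal.toReal_ofReal (by positivity), max_eq_left (by linarith)]

lemma nnnorm_ellp_eq (hP : 2 < P) (x : ellp P k) :
    ‖x‖₊ = (∑ i, ‖x i‖₊ ^ P) ^ (1 / P) := by
  rw [PiLp.nnnorm_eq_sum (by simp [ENNReal.ofReal_ne_top]) x, toReal_q hP]

lemma nnnorm_eucl_eq (y : EuclideanSpace ℂ (Fin k)) :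
    ‖y‖₊ = (∑ i, ‖y i‖₊ ^ (2 : ℝ)) ^ (1 / (2 : ℝ)) := by
  rw [PiLp.nnnorm_eq_sum (by norm_num) y]
  norm_num

lemma nnnorm_down (hP : 2 < P) (x : ellp P k) (y : EuclideanSpace ℂ (Fin k))
    (h : ∀ i, y i = x i) : ‖x‖₊ ≤ ‖y‖₊ := by
  have hP0 : (0 : ℝ) < P := by linarith
  rw [nnnorm_ellp_eq hP, nnnorm_eucl_eq]
  simp only [h]
  set b : Fin k → ℝ≥0 := fun i => ‖x i‖₊ ^ (2 : ℝ) with hb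
  have ht : (1 : ℝ) ≤ P / 2 := by linarith
  have h1 : ∀ i, ‖x i‖₊ ^ P = b i ^ (P / 2) := by
    intro i
    rw [hb, ← NNReal.rpow_mul, show (2:ℝ) * (P/2) = P by ring]
  calc (∑ i, ‖x i‖₊ ^ P) ^ (1 / P) = (∑ i, b i ^ (P / 2)) ^ (1 / P) := by
        simp_rw [h1]
  _ ≤ ((∑ i, b i) ^ (P / 2)) ^ (1 / P) :=
        NNReal.rpow_le_rpow (aux_sum_rpow_le b ht) (by positivity)
  _ = (∑ i, b i) ^ (1 / (2:ℝ)) := by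
        rw [← NNReal.rpow_mul]
        congr 1
        field_simp

lemma nnnorm_up (hP : 2 < P) (x : ellp P k) (y : EuclideanSpace ℂ (Fin k))
    (h : ∀ i, y i = x i) :
    ‖y‖₊ ≤ (k : ℝ≥0) ^ (1 / 2 - 1 / P) * ‖x‖₊ := by
  have hP0 : (0 : ℝ) < P := by linarith
  rw [nnnorm_ellp_eq hP, nnnorm_eucl_eq]
  simp only [h]
  set b : Fin k → ℝ≥0 := fun i => ‖x i‖₊ ^ (2 : ℝ) with hb
  have ht : (1 : ℝ) ≤ P / 2 := by linarith
  have h1 : ∀ i, ‖x i‖₊ ^ P = b i ^ (P / 2) := by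
    intro i
    rw [hb, ← NNReal.rpow_mul, show (2:ℝ) * (P/2) = P by ring]
  have key := aux_holder b ht
  have := NNReal.rpow_le_rpow key (by norm_num : (0:ℝ) ≤ 1 / 2)
  calc (∑ i, b i) ^ (1 / (2:ℝ))
      ≤ ((k : ℝ≥0) ^ (1 - (P/2)⁻¹) * (∑ i, b i ^ (P/2)) ^ (P/2)⁻¹) ^ (1/(2:ℝ)) := this
  _ = (k : ℝ≥0) ^ (1/2 - 1/P) * ((∑ i, b i ^ (P/2)) ^ (1/P)) := by
        rw [NNReal.mul_rpow, ← NNReal.rpow_mul, ← NNReal.rpow_mul,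
          show (1 - (P/2)⁻¹) * (1/2) = 1/2 - 1/P by rw [inv_div]; ring,
          show (P/2)⁻¹ * (1/2) = 1/P by rw [inv_div]; ring]
  _ = (k : ℝ≥0) ^ (1/2 - 1/P) * (∑ i, ‖x i‖₊ ^ P) ^ (1/P) := by simp_rw [h1]

end

noncomputable def eqvc (P : ℝ) (K : ℕ) : ellp P K ≃ₗ[ℂ] EuclideanSpace ℂ (Fin K) :=
  (WithLp.linearEquiv _ ℂ _).trans (WithLp.linearEquiv 2 ℂ _).symm

lemma eqvc_apply (P : ℝ) (K : ℕ) (x : ellp P K) (i : Fin K) : eqvc P K x i = x i := rfl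
lemma eqvc_symm_apply (P : ℝ) (K : ℕ) (y : EuclideanSpace ℂ (Fin K)) (i : Fin K) :
    (eqvc P K).symm y i = y i := rfl

lemma norm_eqvc_le {P : ℝ} (hP : 2 < P) {K : ℕ} (x : ellp P K) :
    ‖eqvc P K x‖ ≤ (K : ℝ) ^ (1 / 2 - 1 / P) * ‖x‖ := by
  have := nnnorm_up hP x (eqvc P K x) (fun i => rfl)
  have h2 := NNReal.coe_le_coe.2 this
  simpa [NNReal.coe_rpow] using h2

lemma norm_eqvc_symm_le {P : ℝ} (hP : 2 < P) {K : ℕ} (y : EuclideanSpace ℂ (Fin K)) :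
    ‖(eqvc P K).symm y‖ ≤ ‖y‖ := by
  exact_mod_cast nnnorm_down hP ((eqvc P K).symm y) y (fun i => rfl)

section main
variable {p : ℕ → ℝ} {k : ℕ → ℕ} {B : ℝ}

lemma memT (hp2 : ∀ n, 2 < p n) (hB : ∀ n, (k n : ℝ) ^ (1 / 2 - 1 / p n) ≤ B)
    (f : lpSum p k) :
    Memℓp (fun n => eqvc (p n) (k n) (f n)) 2 := by
  apply memℓp_gen
  have hs := (lp.memℓp f).summable (by norm_num : 0 < (2:ℝ≥0∞).toReal)
  apply Summable.of_nonneg_of_le (fun n => by positivity)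
    (fun n => ?_) (hs.mul_left (B ^ (2:ℝ≥0∞).toReal))
  have h1 : ‖eqvc (p n) (k n) (f n)‖ ≤ B * ‖f n‖ :=
    (norm_eqvc_le (hp2 n) (f n)).trans
      (mul_le_mul_of_nonneg_right (hB n) (norm_nonneg _))
  calc ‖eqvc (p n) (k n) (f n)‖ ^ (2:ℝ≥0∞).toReal ≤ (B * ‖f n‖) ^ (2:ℝ≥0∞).toReal := by
        apply Real.rpow_le_rpow (norm_nonneg _) h1 (by norm_num)
  _ = B ^ (2:ℝ≥0∞).toReal * ‖f n‖ ^ (2:ℝ≥0∞).toReal := by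
        apply Real.mul_rpow ?_ (norm_nonneg _)
        exact le_trans (by positivity) (hB 0)

lemma memS (hp2 : ∀ n, 2 < p n) (g : lp (fun n => EuclideanSpace ℂ (Fin (k n))) 2) :
    Memℓp (fun n => (eqvc (p n) (k n)).symm (g n)) 2 := by
  apply memℓp_gen
  have hs := (lp.memℓp g).summable (by norm_num : 0 < (2:ℝ≥0∞).toReal)
  apply Summable.of_nonneg_of_le (fun n => by positivity) (fun n => ?_) hs
  exact Real.rpow_le_rpow (norm_nonneg _) (norm_eqvc_symm_le (hp2 n) (g n)) (by norm_num)

noncomputable def Tmap (hp2 : ∀ n, 2 < p n) (hB : ∀ n, (k n : ℝ) ^ (1 / 2 - 1 / p n) ≤ B) :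
    lpSum p k →ₗ[ℂ] lp (fun n => EuclideanSpace ℂ (Fin (k n))) 2 where
  toFun f := ⟨fun n => eqvc (p n) (k n) (f n), memT hp2 hB f⟩
  map_add' f g := rfl
  map_smul' c f := rfl

noncomputable def Smap (hp2 : ∀ n, 2 < p n) :
    lp (fun n => EuclideanSpace ℂ (Fin (k n))) 2 →ₗ[ℂ] lpSum p k where
  toFun g := ⟨fun n => (eqvc (p n) (k n)).symm (g n), memS hp2 g⟩
  map_add' f g := rfl
  map_smul' c f := rfl

lemma Tmap_norm_le (hp2 : ∀ n, 2 < p n) (hB : ∀ n, (k n : ℝ) ^ (1 / 2 - 1 / p n) ≤ B)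
    (f : lpSum p k) : ‖Tmap hp2 hB f‖ ≤ B * ‖f‖ := by
  have hB0 : 0 ≤ B := le_trans (by positivity) (hB 0)
  apply lp.norm_le_of_forall_sum_le (by norm_num : 0 < (2:ℝ≥0∞).toReal)
    (by positivity) (fun s => ?_)
  have h2 : ((2:ℝ≥0∞)).toReal = (2:ℝ) := by norm_num
  calc ∑ n ∈ s, ‖(Tmap hp2 hB f) n‖ ^ (2:ℝ≥0∞).toReal
      ≤ ∑ n ∈ s, (B * ‖f n‖) ^ (2:ℝ≥0∞).toReal := by
        apply Finset.sum_le_sum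
        intro n _
        apply Real.rpow_le_rpow (norm_nonneg _) ?_ (by norm_num)
        exact (norm_eqvc_le (hp2 n) (f n)).trans
          (mul_le_mul_of_nonneg_right (hB n) (norm_nonneg _))
  _ = B ^ (2:ℝ≥0∞).toReal * ∑ n ∈ s, ‖f n‖ ^ (2:ℝ≥0∞).toReal := by
        rw [Finset.mul_sum]
        exact Finset.sum_congr rfl fun n _ => Real.mul_rpow hB0 (norm_nonneg _)
  _ ≤ B ^ (2:ℝ≥0∞).toReal * ‖f‖ ^ (2:ℝ≥0∞).toReal := by
        apply mul_le_mul_of_nonneg_left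
          (lp.sum_rpow_le_norm_rpow (by norm_num) f s) (by positivity)
  _ = (B * ‖f‖) ^ (2:ℝ≥0∞).toReal := (Real.mul_rpow hB0 (norm_nonneg _)).symm

lemma Smap_norm_le (hp2 : ∀ n, 2 < p n)
    (g : lp (fun n => EuclideanSpace ℂ (Fin (k n))) 2) : ‖Smap hp2 g‖ ≤ 1 * ‖g‖ := by
  rw [one_mul]
  apply lp.norm_le_of_forall_sum_le (by norm_num : 0 < (2:ℝ≥0∞).toReal)
    (norm_nonneg _) (fun s => ?_)
  calc ∑ n ∈ s, ‖(Smap hp2 g) n‖ ^ (2:ℝ≥0∞).toReal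
      ≤ ∑ n ∈ s, ‖g n‖ ^ (2:ℝ≥0∞).toReal := by
        apply Finset.sum_le_sum
        intro n _
        exact Real.rpow_le_rpow (norm_nonneg _) (norm_eqvc_symm_le (hp2 n) (g n)) (by norm_num)
  _ ≤ ‖g‖ ^ (2:ℝ≥0∞).toReal := lp.sum_rpow_le_norm_rpow (by norm_num) g s

noncomputable def bigCLE (hp2 : ∀ n, 2 < p n) (hB : ∀ n, (k n : ℝ) ^ (1 / 2 - 1 / p n) ≤ B) :
    lpSum p k ≃L[ℂ] lp (fun n => EuclideanSpace ℂ (Fin (k n))) 2 :=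
  ContinuousLinearEquiv.equivOfInverse
    ((Tmap hp2 hB).mkContinuous B (Tmap_norm_le hp2 hB))
    ((Smap hp2).mkContinuous 1 (Smap_norm_le hp2))
    (fun f => by
      apply lp.ext
      funext n
      exact (eqvc (p n) (k n)).symm_apply_apply (f n))
    (fun g => by
      apply lp.ext
      funext n
      rfl)

end main

section B
variable {k : ℕ → ℕ}

noncomputable def vfam (k : ℕ → ℕ) :
    (Σ n, Fin (k n)) → lp (fun n => EuclideanSpace ℂ (Fin (k n))) 2 :=
  fun s => lp.single 2 s.1 (EuclideanSpace.single s.2 1)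

noncomputable def lpSingleLin (k : ℕ → ℕ) (n : ℕ) :
    EuclideanSpace ℂ (Fin (k n)) →ₗ[ℂ] lp (fun n => EuclideanSpace ℂ (Fin (k n))) 2 where
  toFun := fun a => lp.single (E := fun n => EuclideanSpace ℂ (Fin (k n))) 2 n a
  map_add' a b := by
    apply lp.ext
    funext j
    by_cases h : j = n
    · subst h
      simp [lp.single_apply_self, lp.coeFn_add]
    · simp [lp.single_apply_ne 2 n _ h, lp.coeFn_add]
  map_smul' c a := by simp [lp.single_smul]

lemma vfam_orthonormal (k : ℕ → ℕ) : Orthonormal ℂ (vfam k) := by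
  classical
  rw [orthonormal_iff_ite]
  rintro ⟨n, i⟩ ⟨m, j⟩
  simp only [vfam]
  rw [lp.inner_single_left]
  by_cases h : m = n
  · subst h
    rw [lp.single_apply_self, EuclideanSpace.inner_single_left]
    simp [EuclideanSpace.single_apply, Sigma.mk.inj_iff]
  · rw [lp.single_apply_ne 2 _ _ (Ne.symm h)]
    simp [Sigma.mk.inj_iff, Ne.symm h, h]

lemma vfam_total (k : ℕ → ℕ) :
    ⊤ ≤ (span ℂ (Set.range (vfam k))).topologicalClosure := by
  intro f _
  have hf : HasSum (fun n => lp.single 2 n (f n)) f := lp.hasSum_single (by norm_num) f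
  refine mem_closure_of_tendsto hf (Filter.Eventually.of_forall fun s => ?_)
  rw [SetLike.mem_coe]
  refine sum_mem fun n _ => ?_
  classical
  have hdec : (f n : EuclideanSpace ℂ (Fin (k n))) =
      ∑ i, (f n : EuclideanSpace ℂ (Fin (k n))) i • EuclideanSpace.single i (1:ℂ) := by
    have := (EuclideanSpace.basisFun (Fin (k n)) ℂ).sum_repr
      (f n : EuclideanSpace ℂ (Fin (k n)))
    simp only [EuclideanSpace.basisFun_apply, EuclideanSpace.basisFun_repr] at this
    exact this.symm
  have hsingle : lp.single 2 n (f n : EuclideanSpace ℂ (Fin (k n))) =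
      ∑ i, (f n : EuclideanSpace ℂ (Fin (k n))) i • vfam k ⟨n, i⟩ := by
    calc lp.single 2 n (f n : EuclideanSpace ℂ (Fin (k n)))
        = lpSingleLin k n (∑ i, (f n : EuclideanSpace ℂ (Fin (k n))) i •
            EuclideanSpace.single i (1:ℂ)) := by rw [← hdec]; rfl
    _ = ∑ i, (f n : EuclideanSpace ℂ (Fin (k n))) i • vfam k ⟨n, i⟩ := by
        rw [map_sum]
        exact Finset.sum_congr rfl fun i _ => by rw [map_smul]; rfl
  rw [hsingle]
  exact sum_mem fun i _ => smul_mem _ _ (subset_span ⟨⟨n, i⟩, rfl⟩)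

noncomputable def isoB (k : ℕ → ℕ) (hk : ∀ n, 0 < k n) :
    lp (fun n => EuclideanSpace ℂ (Fin (k n))) 2 ≃ₗᵢ[ℂ] lp (fun _ : ℕ => ℂ) 2 := by
  haveI : Infinite (Σ n, Fin (k n)) :=
    Infinite.of_injective (fun n : ℕ => (⟨n, ⟨0, hk n⟩⟩ : Σ n, Fin (k n)))
      (fun a b h => congrArg Sigma.fst h)
  let e : (Σ n, Fin (k n)) ≃ ℕ := Nonempty.some inferInstance
  have hv : Orthonormal ℂ (vfam k ∘ e.symm) :=
    (vfam_orthonormal k).comp _ e.symm.injective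
  have hsp : ⊤ ≤ (span ℂ (Set.range (vfam k ∘ ⇑e.symm))).topologicalClosure := by
    rw [Set.range_comp, Equiv.range_eq_univ, Set.image_univ]
    exact vfam_total k
  exact (HilbertBasis.mk hv hsp).repr

end B

/-- If `2 < p_n < ∞`, `k_n ≥ 1`, and the sequence `k_n ^ (1/2 - 1/p_n)` is bounded, then
`Z = (∑_n ℓ_{p_n}^{k_n})₂` is isomorphic (continuously linearly equivalent) to complex
`ℓ₂(ℕ)`. -/
theorem lpSum_isomorphic_ell2 (p : ℕ → ℝ) (k : ℕ → ℕ)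
    (hp2 : ∀ n, 2 < p n) (hk : ∀ n, 0 < k n)
    (hbdd : ∃ B : ℝ, ∀ n, (k n : ℝ) ^ (1 / 2 - 1 / p n) ≤ B) :
    Nonempty (lpSum p k ≃L[ℂ] lp (fun _ : ℕ => ℂ) 2) := by
  obtain ⟨B, hB⟩ := hbdd
  exact ⟨(bigCLE hp2 hB).trans (isoB k hk).toContinuousLinearEquiv⟩
end
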